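/- Let H be a Hopf algebra over a field k with bijective antipode S, τ a Hopf algebra automorphism of H of finite order r, and A ⊆ H a Hopf subalgebra with τ(A) = A; let r' be the order of τ restricted to A (so r' divides r). Then exp_{τ|_A}(A) divides exp_τ(H)·(r/r'). In particular, if r' = r, then exp_{τ|_A}(A) divides exp_τ(H). -/

import Mathlib

open scoped TensorProduct

noncomputable section

namespace TwistedExponent

variable (k H : Type*) [CommRing k] [Ring H] [HopfAlgebra k H]

/-- The convolution product of two linear endomorphisms of a bialgebra:
`f * g = μ ∘ (f ⊗ g) ∘ Δ`. -/
def conv (f g : H →ₗ[k] H) : H →ₗ[k] H :=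
  LinearMap.mul' k H ∘ₗ TensorProduct.map f g ∘ₗ Coalgebra.comul

/-- The convolution unit `η ∘ ε`, i.e. `h ↦ ε(h)·1`. -/
def convOne : H →ₗ[k] H := Algebra.linearMap k H ∘ₗ Coalgebra.counit

/-- `gamma T m` is the map `Γ_m = μ^m ∘ (Id ⊗ T ⊗ T² ⊗ ⋯ ⊗ T^{m-1}) ∘ Δ^{m-1}`, expressed as
the convolution product `Id * T * T² * ⋯ * T^{m-1}` (with `gamma T 0` the convolution unit). -/
def gamma (T : H →ₗ[k] H) : ℕ → (H →ₗ[k] H)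
  | 0 => convOne k H
  | (m + 1) => conv k H (gamma T m) (T ^ m)

/-- The inverse of the antipode, given that the antipode is bijective. -/
def antipodeInv (hS : Function.Bijective (HopfAlgebra.antipode (R := k) (A := H))) :
    H →ₗ[k] H :=
  (LinearEquiv.ofBijective (HopfAlgebra.antipode (R := k) (A := H)) hS).symm

/-- The map `S⁻² ∘ τ`. -/
def twist (hS : Function.Bijective (HopfAlgebra.antipode (R := k) (A := H)))
    (τ : H →ₗ[k] H) : H →ₗ[k] H :=
  antipodeInv k H hS ∘ₗ antipodeInv k H hS ∘ₗ τ

/-- `f : H → H` has exact (finite) order `r`. -/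
def HasOrder (τ : H → H) (r : ℕ) : Prop :=
  0 < r ∧ τ^[r] = id ∧ ∀ s : ℕ, 0 < s → s < r → τ^[s] ≠ id

end TwistedExponent

open TwistedExponent


namespace TE
open Coalgebra
variable {k : Type*} [CommRing k]

section convgen
variable {C : Type*} [AddCommMonoid C] [Module k C] [Coalgebra k C]
variable {B : Type*} [Semiring B] [Algebra k B]

/-- The convolution unit on maps from a coalgebra to an algebra. -/
def cunit : C →ₗ[k] B := Algebra.linearMap k B ∘ₗ Coalgebra.counit

/-- The convolution product on maps from a coalgebra to an algebra. -/
def cmul (f g : C →ₗ[k] B) : C →ₗ[k] B :=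
  LinearMap.mul' k B ∘ₗ TensorProduct.map f g ∘ₗ Coalgebra.comul

lemma cunit_apply (a : C) : (cunit (k := k) (B := B)) a = algebraMap k B (counit a) := rfl

lemma cmul_apply_repr (f g : C →ₗ[k] B) {a : C} {ι : Type*} (re : Repr k a ι) :
    cmul f g a = ∑ i ∈ re.index, f (re.left i) * g (re.right i) := by
  simp [cmul, ← re.eq, map_sum]

lemma sum_counit_smul {a : C} {ι : Type*} (re : Repr k a ι) :
    ∑ i ∈ re.index, counit (R := k) (re.left i) • re.right i = a := by
  calc ∑ i ∈ re.index, counit (R := k) (re.left i) • re.right i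
      = TensorProduct.lid k C (∑ i ∈ re.index, counit (R := k) (re.left i) ⊗ₜ[k] re.right i) := by
        rw [map_sum]; simp
    _ = TensorProduct.lid k C ((1 : k) ⊗ₜ[k] a) := by rw [sum_counit_tmul_eq re]
    _ = a := by simp

lemma sum_smul_counit {a : C} {ι : Type*} (re : Repr k a ι) :
    ∑ i ∈ re.index, counit (R := k) (re.right i) • re.left i = a := by
  calc ∑ i ∈ re.index, counit (R := k) (re.right i) • re.left i
      = TensorProduct.rid k C (∑ i ∈ re.index, re.left i ⊗ₜ[k] counit (R := k) (re.right i)) := by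
        rw [map_sum]; simp
    _ = TensorProduct.rid k C (a ⊗ₜ[k] (1 : k)) := by rw [sum_tmul_counit_eq re]
    _ = a := by simp

lemma cmul_cunit_left (f : C →ₗ[k] B) : cmul cunit f = f := by
  ext a
  obtain re := Repr.arbitrary k a
  rw [cmul_apply_repr _ _ re]
  have h : ∑ i ∈ re.index, (cunit (k := k) (B := B)) (re.left i) * f (re.right i)
      = ∑ i ∈ re.index, counit (R := k) (re.left i) • f (re.right i) := by
    refine Finset.sum_congr rfl fun i _ => ?_
    rw [cunit_apply, ← Algebra.smul_def]
  rw [h]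
  conv_rhs => rw [← sum_counit_smul re]
  rw [map_sum]
  simp [map_smul]

lemma cmul_cunit_right (f : C →ₗ[k] B) : cmul f cunit = f := by
  ext a
  obtain re := Repr.arbitrary k a
  rw [cmul_apply_repr _ _ re]
  have h : ∑ i ∈ re.index, f (re.left i) * (cunit (k := k) (B := B)) (re.right i)
      = ∑ i ∈ re.index, counit (R := k) (re.right i) • f (re.left i) := by
    refine Finset.sum_congr rfl fun i _ => ?_
    rw [cunit_apply, ← Algebra.commutes, ← Algebra.smul_def]
  rw [h]
  conv_rhs => rw [← sum_smul_counit re]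
  rw [map_sum]
  simp [map_smul]

lemma cmul_assoc (f g h : C →ₗ[k] B) : cmul (cmul f g) h = cmul f (cmul g h) := by
  ext a
  set re := Repr.arbitrary k a with hre
  set a₁ : (i : re.ι) → Repr k (re.left i) (C × C) := fun i => Repr.arbitrary k (re.left i) with ha₁
  set a₂ : (i : re.ι) → Repr k (re.right i) (C × C) := fun i => Repr.arbitrary k (re.right i) with ha₂
  have key := sum_map_tmul_tmul_eq (R := k) f g h a (repr := re) (a₁ := a₁) (a₂ := a₂)
  apply_fun (LinearMap.mul' k B ∘ₗ LinearMap.lTensor B (LinearMap.mul' k B)) at key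
  simp only [map_sum, LinearMap.comp_apply, LinearMap.lTensor_tmul, LinearMap.mul'_apply] at key
  calc (cmul (cmul f g) h) a
      = ∑ i ∈ re.index, (cmul f g) (re.left i) * h (re.right i) := cmul_apply_repr _ _ re
    _ = ∑ i ∈ re.index, (∑ j ∈ (a₁ i).index, f ((a₁ i).left j) * g ((a₁ i).right j)) *
          h (re.right i) :=
        Finset.sum_congr rfl fun i _ => by rw [cmul_apply_repr _ _ (a₁ i)]
    _ = ∑ i ∈ re.index, ∑ j ∈ (a₁ i).index,
          f ((a₁ i).left j) * (g ((a₁ i).right j) * h (re.right i)) := by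
        refine Finset.sum_congr rfl fun i _ => ?_
        rw [Finset.sum_mul]
        exact Finset.sum_congr rfl fun j _ => mul_assoc _ _ _
    _ = ∑ i ∈ re.index, ∑ j ∈ (a₂ i).index,
          f (re.left i) * (g ((a₂ i).left j) * h ((a₂ i).right j)) := key.symm
    _ = ∑ i ∈ re.index, f (re.left i) * (cmul g h) (re.right i) := by
        refine Finset.sum_congr rfl fun i _ => ?_
        rw [cmul_apply_repr _ _ (a₂ i), Finset.mul_sum]
    _ = (cmul f (cmul g h)) a := (cmul_apply_repr _ _ re).symm

lemma conv_inv_unique {F G N : C →ₗ[k] B} (h1 : cmul N F = cunit) (h2 : cmul F G = cunit) :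
    N = G := by
  calc N = cmul N cunit := (cmul_cunit_right N).symm
    _ = cmul N (cmul F G) := by rw [h2]
    _ = cmul (cmul N F) G := (cmul_assoc N F G).symm
    _ = cmul cunit G := by rw [h1]
    _ = G := cmul_cunit_left G

end convgen

lemma comm_map_comm {M : Type*} [AddCommMonoid M] [Module k M] (f g : M →ₗ[k] M)
    (y : M ⊗[k] M) :
    TensorProduct.comm k M M (TensorProduct.map f g y) =
      TensorProduct.map g f (TensorProduct.comm k M M y) := by
  induction y using TensorProduct.induction_on with
  | zero => simp
  | tmul x z => simp
  | add u v hu hv => simp [map_add, hu, hv]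

lemma comm_comm {M : Type*} [AddCommMonoid M] [Module k M] (y : M ⊗[k] M) :
    TensorProduct.comm k M M (TensorProduct.comm k M M y) = y := by
  induction y using TensorProduct.induction_on with
  | zero => simp
  | tmul x z => simp
  | add u v hu hv => simp [map_add, hu, hv]

lemma map_comp_apply' {M : Type*} [AddCommMonoid M] [Module k M]
    (f₁ f₂ g₁ g₂ : M →ₗ[k] M) (u : M ⊗[k] M) :
    TensorProduct.map f₂ g₂ (TensorProduct.map f₁ g₁ u) =
      TensorProduct.map (f₂ ∘ₗ f₁) (g₂ ∘ₗ g₁) u := by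
  rw [TensorProduct.map_comp]; rfl

section hopf
variable {H : Type*} [Ring H] [HopfAlgebra k H]

lemma cmul_comulAntipode_comul :
    cmul (Coalgebra.comul ∘ₗ (HopfAlgebra.antipode (R := k) (A := H)))
      (Coalgebra.comul (R := k) (A := H)) = cunit := by
  ext a
  obtain re := Repr.arbitrary k a
  rw [cmul_apply_repr _ _ re]
  have h : ∀ i ∈ re.index,
      (Coalgebra.comul ∘ₗ (HopfAlgebra.antipode (R := k) (A := H))) (re.left i) *
        Coalgebra.comul (re.right i)
      = Coalgebra.comul (R := k)
          ((HopfAlgebra.antipode (R := k)) (re.left i) * re.right i) := by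
    intro i _
    rw [LinearMap.comp_apply, ← Bialgebra.comul_mul]
  rw [Finset.sum_congr rfl h, ← map_sum, HopfAlgebra.sum_antipode_mul_eq_algebraMap_counit re,
    Bialgebra.comul_algebraMap, cunit_apply]

lemma cmul_comul_antiG :
    cmul (Coalgebra.comul (R := k) (A := H))
      (((TensorProduct.comm k H H).toLinearMap ∘ₗ
          TensorProduct.map (HopfAlgebra.antipode (R := k)) (HopfAlgebra.antipode (R := k))) ∘ₗ
        Coalgebra.comul) = cunit := by
  ext a
  set re := Repr.arbitrary k a with hre
  set rL : (i : re.ι) → Repr k (re.left i) (H × H) := fun i => Repr.arbitrary k (re.left i) with hrL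
  set rR : (i : re.ι) → Repr k (re.right i) (H × H) := fun i => Repr.arbitrary k (re.right i) with hrR
  have J : ∀ i ∈ re.index,
      ∑ p ∈ (rL i).index,
        Coalgebra.comul (R := k) ((rL i).left p) *
          ((HopfAlgebra.antipode (R := k)) (re.right i) ⊗ₜ[k]
            (HopfAlgebra.antipode (R := k)) ((rL i).right p))
      = (re.left i * (HopfAlgebra.antipode (R := k)) (re.right i)) ⊗ₜ[k] 1 := by
    intro i _
    set rLL : (p : (rL i).ι) → Repr k ((rL i).left p) (H × H) :=
      fun p => Repr.arbitrary k ((rL i).left p) with hrLL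
    set rLR : (p : (rL i).ι) → Repr k ((rL i).right p) (H × H) :=
      fun p => Repr.arbitrary k ((rL i).right p) with hrLR
    have I1 := sum_tmul_tmul_eq (rL i) rLL rLR
    apply_fun (TensorProduct.map
        (LinearMap.mulRight k ((HopfAlgebra.antipode (R := k)) (re.right i)))
        (LinearMap.mul' k H ∘ₗ LinearMap.lTensor H (HopfAlgebra.antipode (R := k)))) at I1
    simp only [map_sum, TensorProduct.map_tmul, LinearMap.comp_apply,
      LinearMap.lTensor_tmul, LinearMap.mul'_apply, LinearMap.mulRight_apply] at I1
    calc ∑ p ∈ (rL i).index,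
        Coalgebra.comul (R := k) ((rL i).left p) *
          ((HopfAlgebra.antipode (R := k)) (re.right i) ⊗ₜ[k]
            (HopfAlgebra.antipode (R := k)) ((rL i).right p))
        = ∑ p ∈ (rL i).index, ∑ q ∈ (rLL p).index,
            ((rLL p).left q * (HopfAlgebra.antipode (R := k)) (re.right i)) ⊗ₜ[k]
              ((rLL p).right q * (HopfAlgebra.antipode (R := k)) ((rL i).right p)) := by
          refine Finset.sum_congr rfl fun p _ => ?_
          rw [← (rLL p).eq, Finset.sum_mul]
          exact Finset.sum_congr rfl fun q _ => Algebra.TensorProduct.tmul_mul_tmul _ _ _ _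
      _ = ∑ p ∈ (rL i).index, ∑ q ∈ (rLR p).index,
            ((rL i).left p * (HopfAlgebra.antipode (R := k)) (re.right i)) ⊗ₜ[k]
              ((rLR p).left q * (HopfAlgebra.antipode (R := k)) ((rLR p).right q)) := I1
      _ = ∑ p ∈ (rL i).index,
            counit (R := k) ((rL i).right p) •
              (((rL i).left p * (HopfAlgebra.antipode (R := k)) (re.right i)) ⊗ₜ[k] (1 : H)) := by
          refine Finset.sum_congr rfl fun p _ => ?_
          rw [← TensorProduct.tmul_sum, HopfAlgebra.sum_mul_antipode_eq_smul (rLR p),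
            TensorProduct.tmul_smul]
      _ = (re.left i * (HopfAlgebra.antipode (R := k)) (re.right i)) ⊗ₜ[k] 1 := by
          have hs : ∀ p ∈ (rL i).index,
              counit (R := k) ((rL i).right p) •
                (((rL i).left p * (HopfAlgebra.antipode (R := k)) (re.right i)) ⊗ₜ[k] (1 : H))
              = ((counit (R := k) ((rL i).right p) • (rL i).left p) *
                  (HopfAlgebra.antipode (R := k)) (re.right i)) ⊗ₜ[k] (1 : H) := by
            intro p _
            rw [TensorProduct.smul_tmul', smul_mul_assoc]
          rw [Finset.sum_congr rfl hs, ← TensorProduct.sum_tmul, ← Finset.sum_mul,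
            sum_smul_counit (rL i)]
  have I0 := sum_tmul_tmul_eq re rL rR
  apply_fun (LinearMap.mul' k (H ⊗[k] H) ∘ₗ
      TensorProduct.map (Coalgebra.comul (R := k) (A := H))
        ((TensorProduct.comm k H H).toLinearMap ∘ₗ
          TensorProduct.map (HopfAlgebra.antipode (R := k)) (HopfAlgebra.antipode (R := k)))) at I0
  simp only [map_sum, LinearMap.comp_apply, TensorProduct.map_tmul,
    LinearEquiv.coe_coe, TensorProduct.comm_tmul, LinearMap.mul'_apply] at I0
  rw [cmul_apply_repr _ _ re]
  have hG : ∀ i ∈ re.index,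
      Coalgebra.comul (R := k) (re.left i) *
        ((((TensorProduct.comm k H H).toLinearMap ∘ₗ
          TensorProduct.map (HopfAlgebra.antipode (R := k)) (HopfAlgebra.antipode (R := k))) ∘ₗ
        Coalgebra.comul) (re.right i))
      = ∑ j ∈ (rR i).index,
          Coalgebra.comul (R := k) (re.left i) *
            ((HopfAlgebra.antipode (R := k)) ((rR i).right j) ⊗ₜ[k]
              (HopfAlgebra.antipode (R := k)) ((rR i).left j)) := by
    intro i _
    rw [LinearMap.comp_apply, LinearMap.comp_apply, ← (rR i).eq, map_sum, map_sum,
      Finset.mul_sum]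
    refine Finset.sum_congr rfl fun j _ => ?_
    simp
  calc ∑ i ∈ re.index, Coalgebra.comul (R := k) (re.left i) *
        ((((TensorProduct.comm k H H).toLinearMap ∘ₗ
          TensorProduct.map (HopfAlgebra.antipode (R := k)) (HopfAlgebra.antipode (R := k))) ∘ₗ
        Coalgebra.comul) (re.right i))
      = ∑ i ∈ re.index, ∑ j ∈ (rR i).index,
          Coalgebra.comul (R := k) (re.left i) *
            ((HopfAlgebra.antipode (R := k)) ((rR i).right j) ⊗ₜ[k]
              (HopfAlgebra.antipode (R := k)) ((rR i).left j)) :=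
        Finset.sum_congr rfl hG
    _ = ∑ i ∈ re.index, ∑ p ∈ (rL i).index,
          Coalgebra.comul (R := k) ((rL i).left p) *
            ((HopfAlgebra.antipode (R := k)) (re.right i) ⊗ₜ[k]
              (HopfAlgebra.antipode (R := k)) ((rL i).right p)) := I0.symm
    _ = ∑ i ∈ re.index, (re.left i * (HopfAlgebra.antipode (R := k)) (re.right i)) ⊗ₜ[k] 1 :=
        Finset.sum_congr rfl J
    _ = (∑ i ∈ re.index, re.left i * (HopfAlgebra.antipode (R := k)) (re.right i)) ⊗ₜ[k] 1 :=
        (TensorProduct.sum_tmul _ _ _).symm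
    _ = algebraMap k H (counit (R := k) a) ⊗ₜ[k] 1 := by
        rw [HopfAlgebra.sum_mul_antipode_eq_algebraMap_counit re]
    _ = cunit a := by
        rw [cunit_apply, Algebra.TensorProduct.algebraMap_apply]

lemma comul_antipode :
    Coalgebra.comul ∘ₗ (HopfAlgebra.antipode (R := k) (A := H)) =
      ((TensorProduct.comm k H H).toLinearMap ∘ₗ
        TensorProduct.map (HopfAlgebra.antipode (R := k)) (HopfAlgebra.antipode (R := k))) ∘ₗ
      Coalgebra.comul :=
  conv_inv_unique cmul_comulAntipode_comul cmul_comul_antiG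

lemma counit_antipode (a : H) :
    counit (R := k) ((HopfAlgebra.antipode (R := k)) a) = counit (R := k) a := by
  obtain re := Repr.arbitrary k a
  have h1 : (HopfAlgebra.antipode (R := k)) a =
      ∑ i ∈ re.index,
        counit (R := k) (re.right i) • (HopfAlgebra.antipode (R := k)) (re.left i) := by
    conv_lhs => rw [← sum_smul_counit re]
    rw [map_sum]; simp [map_smul]
  rw [h1, map_sum]
  have h2 : ∀ i ∈ re.index, counit (R := k)
      (counit (R := k) (re.right i) • (HopfAlgebra.antipode (R := k)) (re.left i))
      = counit (R := k) ((HopfAlgebra.antipode (R := k)) (re.left i) * re.right i) := by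
    intro i _
    rw [map_smul, Bialgebra.counit_mul, smul_eq_mul, mul_comm]
  rw [Finset.sum_congr rfl h2, ← map_sum, HopfAlgebra.sum_antipode_mul_eq_algebraMap_counit re,
    Bialgebra.counit_algebraMap]

variable (hS : Function.Bijective (HopfAlgebra.antipode (R := k) (A := H)))

lemma antipode_antipodeInv (x : H) :
    (HopfAlgebra.antipode (R := k)) (antipodeInv k H hS x) = x :=
  (LinearEquiv.ofBijective (HopfAlgebra.antipode (R := k) (A := H)) hS).apply_symm_apply x

lemma antipodeInv_antipode (x : H) :
    antipodeInv k H hS ((HopfAlgebra.antipode (R := k)) x) = x :=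
  (LinearEquiv.ofBijective (HopfAlgebra.antipode (R := k) (A := H)) hS).symm_apply_apply x

lemma counit_antipodeInv (x : H) :
    counit (R := k) (antipodeInv k H hS x) = counit (R := k) x := by
  conv_rhs => rw [← antipode_antipodeInv hS x, counit_antipode]

lemma map_antipodeInv_antipode (u : H ⊗[k] H) :
    TensorProduct.map (antipodeInv k H hS) (antipodeInv k H hS)
      (TensorProduct.map (HopfAlgebra.antipode (R := k)) (HopfAlgebra.antipode (R := k)) u)
      = u := by
  rw [map_comp_apply']
  have h : (antipodeInv k H hS) ∘ₗ (HopfAlgebra.antipode (R := k) (A := H)) = LinearMap.id := by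
    ext x; exact antipodeInv_antipode hS x
  rw [h, TensorProduct.map_id, LinearMap.id_apply]

lemma comul_antipodeInv (x : H) :
    Coalgebra.comul (R := k) (antipodeInv k H hS x) =
      TensorProduct.comm k H H
        (TensorProduct.map (antipodeInv k H hS) (antipodeInv k H hS)
          (Coalgebra.comul (R := k) x)) := by
  have h := LinearMap.congr_fun (comul_antipode (k := k) (H := H)) (antipodeInv k H hS x)
  simp only [LinearMap.comp_apply, LinearEquiv.coe_coe] at h
  rw [antipode_antipodeInv hS] at h
  rw [h, ← comm_map_comm, comm_comm, map_antipodeInv_antipode hS]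

lemma comul_twist (τl : H →ₗ[k] H)
    (hτ : ∀ x : H, Coalgebra.comul (R := k) (τl x) =
      TensorProduct.map τl τl (Coalgebra.comul (R := k) x)) (x : H) :
    Coalgebra.comul (R := k) (twist k H hS τl x) =
      TensorProduct.map (twist k H hS τl) (twist k H hS τl)
        (Coalgebra.comul (R := k) x) := by
  show Coalgebra.comul (antipodeInv k H hS (antipodeInv k H hS (τl x))) = _
  rw [comul_antipodeInv hS, comul_antipodeInv hS, ← comm_map_comm, comm_comm,
    hτ, map_comp_apply', map_comp_apply']
  rfl

lemma counit_twist (τl : H →ₗ[k] H)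
    (hτε : ∀ x : H, counit (R := k) (τl x) = counit (R := k) x) (x : H) :
    counit (R := k) (twist k H hS τl x) = counit (R := k) x := by
  show counit (antipodeInv k H hS (antipodeInv k H hS (τl x))) = _
  rw [counit_antipodeInv hS, counit_antipodeInv hS, hτε]

lemma conv_eq_cmul (f g : H →ₗ[k] H) : conv k H f g = cmul f g := rfl
lemma convOne_eq_cunit : convOne k H = cunit := rfl

lemma gamma_succ (T : H →ₗ[k] H) (j : ℕ) :
    gamma k H T (j + 1) = cmul (gamma k H T j) (T ^ j) := rfl

lemma comul_powT (T : H →ₗ[k] H)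
    (hTc : ∀ x : H, Coalgebra.comul (R := k) (T x) =
      TensorProduct.map T T (Coalgebra.comul (R := k) x)) (m : ℕ) (x : H) :
    Coalgebra.comul (R := k) ((T ^ m) x) =
      TensorProduct.map (T ^ m) (T ^ m) (Coalgebra.comul (R := k) x) := by
  induction m generalizing x with
  | zero => simp [TensorProduct.map_id]
  | succ m ih =>
      rw [pow_succ, Module.End.mul_apply, ih, hTc, map_comp_apply', ← Module.End.mul_eq_comp,
        ← pow_succ]

lemma counit_powT (T : H →ₗ[k] H)
    (hTe : ∀ x : H, counit (R := k) (T x) = counit (R := k) x) (m : ℕ) (x : H) :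
    counit (R := k) ((T ^ m) x) = counit (R := k) x := by
  induction m generalizing x with
  | zero => simp
  | succ m ih => rw [pow_succ, Module.End.mul_apply, ih, hTe]

lemma cmul_comp (f g φ : H →ₗ[k] H)
    (hφ : ∀ x : H, Coalgebra.comul (R := k) (φ x) =
      TensorProduct.map φ φ (Coalgebra.comul (R := k) x)) :
    (cmul f g) ∘ₗ φ = cmul (f ∘ₗ φ) (g ∘ₗ φ) := by
  ext x
  simp only [LinearMap.comp_apply, cmul, hφ, map_comp_apply']

lemma cunit_comp (φ : H →ₗ[k] H)
    (hφε : ∀ x : H, counit (R := k) (φ x) = counit (R := k) x) :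
    (cunit (k := k) (B := H)) ∘ₗ φ = cunit := by
  ext x
  simp only [LinearMap.comp_apply, cunit_apply, hφε]

lemma gamma_add (T : H →ₗ[k] H)
    (hTc : ∀ x : H, Coalgebra.comul (R := k) (T x) =
      TensorProduct.map T T (Coalgebra.comul (R := k) x))
    (hTe : ∀ x : H, counit (R := k) (T x) = counit (R := k) x) (m n : ℕ) :
    gamma k H T (m + n) = cmul (gamma k H T m) ((gamma k H T n) ∘ₗ T ^ m) := by
  induction n with
  | zero =>
      show gamma k H T m = cmul (gamma k H T m) ((convOne k H) ∘ₗ T ^ m)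
      rw [convOne_eq_cunit, cunit_comp (T ^ m) (counit_powT T hTe m), cmul_cunit_right]
  | succ n ih =>
      show gamma k H T ((m + n) + 1) = _
      rw [gamma_succ, ih, cmul_assoc]
      congr 1
      rw [gamma_succ, cmul_comp _ _ (T ^ m) (comul_powT T hTc m)]
      congr 1
      rw [← Module.End.mul_eq_comp, ← pow_add, add_comm]

lemma gamma_mem_add (T : H →ₗ[k] H)
    (hTc : ∀ x : H, Coalgebra.comul (R := k) (T x) =
      TensorProduct.map T T (Coalgebra.comul (R := k) x))
    (hTe : ∀ x : H, counit (R := k) (T x) = counit (R := k) x) {m n : ℕ}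
    (hm : gamma k H T m = cunit) (hn : gamma k H T n = cunit) :
    gamma k H T (m + n) = cunit := by
  rw [gamma_add T hTc hTe, hm, hn, cunit_comp (T ^ m) (counit_powT T hTe m), cmul_cunit_left]

lemma gamma_mem_cancel (T : H →ₗ[k] H)
    (hTc : ∀ x : H, Coalgebra.comul (R := k) (T x) =
      TensorProduct.map T T (Coalgebra.comul (R := k) x))
    (hTe : ∀ x : H, counit (R := k) (T x) = counit (R := k) x)
    (hTsurj : Function.Surjective T) {m n : ℕ}
    (hm : gamma k H T m = cunit) (hmn : gamma k H T (m + n) = cunit) :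
    gamma k H T n = cunit := by
  rw [gamma_add T hTc hTe, hm, cmul_cunit_left] at hmn
  ext x
  obtain ⟨y, hy⟩ : ∃ y, (T ^ m) y = x := by
    obtain ⟨y, hy⟩ := hTsurj.iterate m x
    exact ⟨y, by rw [Module.End.pow_apply]; exact hy⟩
  have h2 := LinearMap.congr_fun hmn y
  rw [LinearMap.comp_apply, hy] at h2
  rw [h2, cunit_apply, cunit_apply, ← hy, counit_powT T hTe]

end hopf

section iota
variable {H A : Type*} [Ring H] [HopfAlgebra k H] [Ring A] [HopfAlgebra k A]
variable (ι : A →ₐc[k] H)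

lemma iota_cunit (x : A) : (convOne k H) (ι x) = ι ((convOne k A) x) := by
  show algebraMap k H (counit (ι x)) = ι (algebraMap k A (counit x))
  rw [CoalgHomClass.counit_comp_apply, AlgHomClass.commutes]

lemma iota_conv (f g : A →ₗ[k] A) (F G : H →ₗ[k] H)
    (hF : ∀ x : A, F (ι x) = ι (f x)) (hG : ∀ x : A, G (ι x) = ι (g x)) (x : A) :
    (conv k H F G) (ι x) = ι ((conv k A f g) x) := by
  obtain re := Repr.arbitrary k x
  have hL : (conv k H F G) (ι x) = ∑ i ∈ re.index, F (ι (re.left i)) * G (ι (re.right i)) := by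
    show LinearMap.mul' k H (TensorProduct.map F G (Coalgebra.comul (ι x))) = _
    rw [← CoalgHomClass.map_comp_comul_apply ι x, ← re.eq]
    simp [map_sum]
  rw [hL]
  have hR : ι ((conv k A f g) x) = ∑ i ∈ re.index, ι (f (re.left i)) * ι (g (re.right i)) := by
    rw [show (conv k A f g) x = cmul f g x from rfl, cmul_apply_repr f g re, map_sum]
    exact Finset.sum_congr rfl fun i _ => map_mul ι _ _
  rw [hR]
  exact Finset.sum_congr rfl fun i _ => by rw [hF, hG]

lemma iota_antipode (x : A) :
    (HopfAlgebra.antipode (R := k)) (ι x) = ι ((HopfAlgebra.antipode (R := k)) x) := by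
  have h1 : cmul ((ι : A →ₗ[k] H) ∘ₗ (HopfAlgebra.antipode (R := k) (A := A)))
      (ι : A →ₗ[k] H) = cunit := by
    ext a
    obtain re := Repr.arbitrary k a
    rw [cmul_apply_repr _ _ re]
    have h : ∀ i ∈ re.index,
        ((ι : A →ₗ[k] H) ∘ₗ (HopfAlgebra.antipode (R := k) (A := A))) (re.left i) *
          (ι : A →ₗ[k] H) (re.right i)
        = ι ((HopfAlgebra.antipode (R := k)) (re.left i) * re.right i) := by
      intro i _
      show ι ((HopfAlgebra.antipode (R := k)) (re.left i)) * ι (re.right i) = _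
      rw [← map_mul]
    rw [Finset.sum_congr rfl h, ← map_sum, HopfAlgebra.sum_antipode_mul_eq_algebraMap_counit re,
      AlgHomClass.commutes, cunit_apply]
  have h2 : cmul (ι : A →ₗ[k] H)
      ((HopfAlgebra.antipode (R := k) (A := H)) ∘ₗ (ι : A →ₗ[k] H)) = cunit := by
    ext a
    obtain re := Repr.arbitrary k a
    rw [cmul_apply_repr _ _ re]
    have key := HopfAlgebra.mul_antipode_lTensor_comul_apply (R := k) (a := ι a)
    rw [← CoalgHomClass.map_comp_comul_apply ι a, ← re.eq] at key
    simp only [map_sum, LinearMap.lTensor_tmul, TensorProduct.map_tmul,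
      LinearMap.mul'_apply, LinearMap.coe_coe] at key
    rw [CoalgHomClass.counit_comp_apply] at key
    simpa [cunit_apply] using key
  exact LinearMap.congr_fun
    (conv_inv_unique (F := (ι : A →ₗ[k] H)) h1 h2).symm x |>.symm ▸ rfl

variable (hS : Function.Bijective (HopfAlgebra.antipode (R := k) (A := H)))
variable (hSA : Function.Bijective (HopfAlgebra.antipode (R := k) (A := A)))

lemma iota_antipodeInv (x : A) :
    antipodeInv k H hS (ι x) = ι (antipodeInv k A hSA x) := by
  have h : ι x = (HopfAlgebra.antipode (R := k)) (ι (antipodeInv k A hSA x)) := by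
    rw [iota_antipode, antipode_antipodeInv hSA]
  rw [h, antipodeInv_antipode hS]

end iota

lemma hasOrder_dvd {α : Type*} {f : α → α} {r : ℕ}
    (h : 0 < r ∧ f^[r] = id ∧ ∀ s : ℕ, 0 < s → s < r → f^[s] ≠ id)
    {n : ℕ} (hn : f^[n] = id) : r ∣ n := by
  obtain ⟨hr, hid, hmin⟩ := h
  have hmod : f^[n % r] = id := by
    conv at hn => rw [← Nat.div_add_mod n r, Function.iterate_add, Function.iterate_mul,
      hid, Function.iterate_id, Function.id_comp]
    exact hn
  rcases Nat.eq_zero_or_pos (n % r) with h0 | hpos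
  · exact Nat.dvd_of_mod_eq_zero h0
  · exact absurd hmod (hmin _ hpos (Nat.mod_lt _ hr))

end TE

/-- Let `H` be a Hopf algebra over a field `k` with bijective antipode, `τ` a
Hopf algebra automorphism of `H` of finite order `r`, and `A ⊆ H` a Hopf subalgebra with
`τ(A) = A` (encoded as a Hopf algebra `A` together with an injective bialgebra homomorphism
`ι : A → H` and the restricted automorphism `τA` with `τ ∘ ι = ι ∘ τA`); let `r'` be the order
of `τ` restricted to `A`.  Then `exp_{τ|A}(A)` divides `exp_τ(H)·(r/r')` whenever the latter is
finite (the statement being vacuous when `exp_τ(H) = ∞`, per the convention that every positive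
integer divides `∞`). -/
theorem stmt8 {k H A : Type*} [Field k] [Ring H] [HopfAlgebra k H] [Ring A] [HopfAlgebra k A]
    (hS : Function.Bijective (HopfAlgebra.antipode (R := k) (A := H)))
    (hSA : Function.Bijective (HopfAlgebra.antipode (R := k) (A := A)))
    (τ : H ≃ₐc[k] H) (r : ℕ) (hr : HasOrder H (⇑τ) r)
    (ι : A →ₐc[k] H) (hι : Function.Injective ι)
    (τA : A ≃ₐc[k] A) (hcomm : ∀ a : A, τ (ι a) = ι (τA a))
    (r' : ℕ) (hr' : HasOrder A (⇑τA) r')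
    (e : ℕ)
    (he : IsLeast {n : ℕ | 0 < n ∧
      gamma k H (twist k H hS (τ : H →ₗ[k] H)) (n * r) = convOne k H} e) :
    ∃ e' : ℕ, IsLeast {n : ℕ | 0 < n ∧
      gamma k A (twist k A hSA (τA : A →ₗ[k] A)) (n * r') = convOne k A} e' ∧
      e' ∣ e * (r / r') := by
  classical
  obtain ⟨⟨hepos, hegam⟩, hemin⟩ := he
  set TA : A →ₗ[k] A := twist k A hSA (τA : A →ₗ[k] A) with hTA
  set TH : H →ₗ[k] H := twist k H hS (τ : H →ₗ[k] H) with hTH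
  -- coalgebra-morphism properties of τ and τA
  have hτlc : ∀ x : H, Coalgebra.comul (R := k) ((τ : H →ₗ[k] H) x) =
      TensorProduct.map (τ : H →ₗ[k] H) (τ : H →ₗ[k] H) (Coalgebra.comul (R := k) x) :=
    fun x => (CoalgHomClass.map_comp_comul_apply τ x).symm
  have hτle : ∀ x : H, Coalgebra.counit (R := k) ((τ : H →ₗ[k] H) x) =
      Coalgebra.counit (R := k) x := fun x => CoalgHomClass.counit_comp_apply τ x
  have hτAc : ∀ x : A, Coalgebra.comul (R := k) ((τA : A →ₗ[k] A) x) =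
      TensorProduct.map (τA : A →ₗ[k] A) (τA : A →ₗ[k] A) (Coalgebra.comul (R := k) x) :=
    fun x => (CoalgHomClass.map_comp_comul_apply τA x).symm
  have hτAe : ∀ x : A, Coalgebra.counit (R := k) ((τA : A →ₗ[k] A) x) =
      Coalgebra.counit (R := k) x := fun x => CoalgHomClass.counit_comp_apply τA x
  have hTHc := TE.comul_twist hS (τ : H →ₗ[k] H) hτlc
  have hTHe := TE.counit_twist hS (τ : H →ₗ[k] H) hτle
  have hTAc := TE.comul_twist hSA (τA : A →ₗ[k] A) hτAc
  have hTAe := TE.counit_twist hSA (τA : A →ₗ[k] A) hτAe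
  have hTAsurj : Function.Surjective TA := by
    intro z
    refine ⟨τA.symm ((HopfAlgebra.antipode (R := k))
      ((HopfAlgebra.antipode (R := k)) z)), ?_⟩
    show antipodeInv k A hSA (antipodeInv k A hSA ((τA : A →ₗ[k] A) (τA.symm _))) = z
    have h1 : (τA : A →ₗ[k] A) (τA.symm ((HopfAlgebra.antipode (R := k))
        ((HopfAlgebra.antipode (R := k)) z)))
        = (HopfAlgebra.antipode (R := k)) ((HopfAlgebra.antipode (R := k)) z) :=
      τA.apply_symm_apply _
    rw [h1, TE.antipodeInv_antipode hSA, TE.antipodeInv_antipode hSA]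
  -- r' divides r
  have hiter : ∀ (n : ℕ) (a : A), ι ((⇑τA)^[n] a) = (⇑τ)^[n] (ι a) := by
    intro n
    induction n with
    | zero => intro a; rfl
    | succ n ih =>
        intro a
        rw [Function.iterate_succ_apply, Function.iterate_succ_apply, ih, ← hcomm]
  have hAr : (⇑τA)^[r] = id := by
    funext a
    apply hι
    rw [hiter r a, hr.2.1]
    rfl
  have hdvd : r' ∣ r := TE.hasOrder_dvd hr' hAr
  -- transport gamma along ι
  have hTHι : ∀ x : A, TH (ι x) = ι (TA x) := by
    intro x
    show antipodeInv k H hS (antipodeInv k H hS ((τ : H →ₗ[k] H) (ι x)))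
      = ι (antipodeInv k A hSA (antipodeInv k A hSA ((τA : A →ₗ[k] A) x)))
    have h1 : (τ : H →ₗ[k] H) (ι x) = ι ((τA : A →ₗ[k] A) x) := hcomm x
    rw [h1, TE.iota_antipodeInv ι hS hSA, TE.iota_antipodeInv ι hS hSA]
  have hpowι : ∀ (m : ℕ) (x : A), (TH ^ m) (ι x) = ι ((TA ^ m) x) := by
    intro m
    induction m with
    | zero => intro x; rfl
    | succ m ih =>
        intro x
        rw [pow_succ', pow_succ', Module.End.mul_apply, Module.End.mul_apply, ih, hTHι]
  have hgammaι : ∀ (m : ℕ) (x : A), gamma k H TH m (ι x) = ι (gamma k A TA m x) := by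
    intro m
    induction m with
    | zero => intro x; exact TE.iota_cunit ι x
    | succ m ih =>
        intro x
        exact TE.iota_conv ι (gamma k A TA m) (TA ^ m) (gamma k H TH m) (TH ^ m)
          (fun y => ih y) (fun y => hpowι m y) x
  have hgA : gamma k A TA (e * r) = convOne k A := by
    ext a
    apply hι
    calc ι (gamma k A TA (e * r) a) = gamma k H TH (e * r) (ι a) := (hgammaι _ a).symm
      _ = convOne k H (ι a) := by rw [hegam]
      _ = ι (convOne k A a) := TE.iota_cunit ι a
  -- the candidate element e * (r / r')
  have hq : (r / r') * r' = r := Nat.div_mul_cancel hdvd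
  have hqpos : 0 < r / r' := Nat.div_pos (Nat.le_of_dvd hr.1 hdvd) hr'.1
  have hNmem : 0 < e * (r / r') ∧
      gamma k A TA ((e * (r / r')) * r') = convOne k A := by
    refine ⟨mul_pos hepos hqpos, ?_⟩
    rw [mul_assoc, hq]
    exact hgA
  have hne : ∃ n, 0 < n ∧ gamma k A TA (n * r') = convOne k A := ⟨e * (r / r'), hNmem⟩
  refine ⟨Nat.find hne, ⟨Nat.find_spec hne, fun b hb => Nat.find_min' hne hb⟩, ?_⟩
  set e' := Nat.find hne with he'
  have he'spec := Nat.find_spec hne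
  -- closure properties
  have hPadd : ∀ m n : ℕ, gamma k A TA (m * r') = convOne k A →
      gamma k A TA (n * r') = convOne k A → gamma k A TA ((m + n) * r') = convOne k A := by
    intro m n hm hn
    rw [add_mul]
    exact TE.gamma_mem_add TA hTAc hTAe hm hn
  have hPcancel : ∀ m n : ℕ, gamma k A TA (m * r') = convOne k A →
      gamma k A TA ((m + n) * r') = convOne k A → gamma k A TA (n * r') = convOne k A := by
    intro m n hm hmn
    rw [add_mul] at hmn
    exact TE.gamma_mem_cancel TA hTAc hTAe hTAsurj hm hmn
  have hPmul : ∀ t : ℕ, gamma k A TA ((e' * t) * r') = convOne k A := by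
    intro t
    induction t with
    | zero => rw [mul_zero, zero_mul]; rfl
    | succ t ih =>
        have := hPadd (e' * t) e' ih he'spec.2
        rwa [← mul_add_one] at this
  -- conclude divisibility
  have hmod : (e * (r / r')) % e' = 0 := by
    by_contra h0
    have hpos' : 0 < (e * (r / r')) % e' := Nat.pos_of_ne_zero h0
    have hlt : (e * (r / r')) % e' < e' := Nat.mod_lt _ he'spec.1
    have hmem : 0 < (e * (r / r')) % e' ∧
        gamma k A TA (((e * (r / r')) % e') * r') = convOne k A := by
      refine ⟨hpos', ?_⟩
      apply hPcancel (e' * ((e * (r / r')) / e')) ((e * (r / r')) % e') (hPmul _)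
      rw [Nat.div_add_mod]
      exact hNmem.2
    exact absurd (Nat.find_min' hne hmem) (Nat.not_le.mpr hlt)
  exact Nat.dvd_of_mod_eq_zero hmod
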